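/- arXiv:1806.05968 — 2 statements merged into one kernel-verified Lean document; each statement's English description precedes it below -/
import Mathlib

section
/- Let (B_{n,p})_{n,p ≥ 0} be the family of rational numbers determined by the initial condition B_{n,0} = B_n (the n-th Bernoulli number, with the convention B_1 = -1/2, i.e. the numbers whose exponential generating function is t/(e^t - 1)) together with the recursion B_{n+1,p} = p·B_{n,p} - ((p+1)^2/(p+2))·B_{n,p+1} for all n, p ≥ 0. For p ≥ 0 let F_p(X) = Σ_{n≥0} B_{n,p} X^n/n! be the corresponding exponential generating function, viewed as a formal power series over ℚ. Then for every p ≥ 0 one has the identity of formal power series F_p(X)·(exp(X) - 1)^{p+1} = (p+1)·(X - H_p)·exp(p·X) + (p+1)·Σ_{k=1}^{p} C(p,k)·H_k·(exp(X) - 1)^{p-k}, where H_n = Σ_{j=1}^{n} 1/j denotes the n-th harmonic number (H_0 = 0) and C(p,k) is the binomial coefficient. -/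
open PowerSeries Finset

lemma pb_dexp : d⁄dX ℚ (PowerSeries.exp ℚ) = PowerSeries.exp ℚ := by
  ext n
  rw [coeff_derivative, coeff_exp, coeff_exp]
  simp only [Algebra.algebraMap_self, RingHom.id_apply, Nat.factorial_succ]
  push_cast
  have h1 : (n.factorial : ℚ) ≠ 0 := Nat.cast_ne_zero.mpr n.factorial_ne_zero
  have h2 : ((n:ℚ)+1) ≠ 0 := by positivity
  field_simp

lemma pb_dexppow (p : ℕ) :
    d⁄dX ℚ (PowerSeries.exp ℚ ^ p) = C (p:ℚ) * PowerSeries.exp ℚ ^ p := by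
  cases p with
  | zero => simp
  | succ n =>
    rw [Derivation.leibniz_pow, pb_dexp]
    simp only [Nat.succ_sub_one, smul_eq_mul, nsmul_eq_mul]
    push_cast
    rw [map_add, map_one, map_natCast, pow_succ]

lemma pb_du : d⁄dX ℚ (PowerSeries.exp ℚ - 1) = PowerSeries.exp ℚ := by
  rw [map_sub, pb_dexp]
  simp

lemma pb_du_pow (m : ℕ) :
    d⁄dX ℚ ((PowerSeries.exp ℚ - 1) ^ (m+1))
      = C ((m:ℚ)+1) * (PowerSeries.exp ℚ - 1) ^ m * PowerSeries.exp ℚ := by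
  rw [Derivation.leibniz_pow, pb_du]
  simp only [Nat.succ_sub_one, smul_eq_mul, nsmul_eq_mul]
  push_cast
  rw [map_add, map_one, map_natCast]
  ring

lemma pb_sum_Icc_reflect {M : Type*} [AddCommMonoid M] (n : ℕ) (f : ℕ → M) :
    ∑ k ∈ Finset.Icc 1 n, f k = ∑ i ∈ Finset.range n, f (n - i) := by
  refine Finset.sum_nbij' (fun k => n - k) (fun i => n - i) ?_ ?_ ?_ ?_ ?_ <;>
    intro a ha <;> simp only [Finset.mem_Icc, Finset.mem_range] at ha <;> (try dsimp only) <;>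
    first | omega | (simp only [Finset.mem_Icc, Finset.mem_range]; omega) | (congr 1; omega)

lemma pb_coeff_id (p i : ℕ) (hi : i ≤ p) :
    ((p:ℚ)+1) * ((p+1).choose (p+1-i) : ℚ) * harmonic (p+1-i)
      = (p.choose i : ℚ)
        + (2*(p:ℚ)+2 - i) * (p.choose (p+1-i) : ℚ) * harmonic (p+1-i)
        + ((p:ℚ)+1-i) * (p.choose (p-i) : ℚ) * harmonic (p-i) := by
  set q := p - i with hq
  have e1 : p + 1 - i = q + 1 := by omega
  have e2 : (i:ℚ) = (p:ℚ) - q := by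
    have : i = p - q := by omega
    rw [this]; push_cast [Nat.cast_sub (by omega : q ≤ p)]; ring
  rw [e1, harmonic_succ]
  have f1 : (((p+1).choose (q+1)) : ℚ) = (p.choose q : ℚ) + (p.choose (q+1) : ℚ) := by
    rw [Nat.choose_succ_succ]; push_cast; ring
  have f2 : ((p.choose (q+1)) : ℚ) * ((q:ℚ)+1) = (p.choose q : ℚ) * ((p:ℚ) - q) := by
    have := Nat.choose_succ_right_eq p q
    have h4 := congrArg (Nat.cast : ℕ → ℚ) this
    push_cast [Nat.cast_sub (show q ≤ p by omega)] at h4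
    linarith [h4]
  have f3 : (p.choose i : ℚ) = (p.choose q : ℚ) := by
    rw [hq, Nat.choose_symm hi]
  have hq1 : ((q:ℚ)+1) ≠ 0 := by positivity
  have hinv : ((q:ℚ)+1)⁻¹ * ((q:ℚ)+1) = 1 := inv_mul_cancel₀ hq1
  rw [f1, f3, e2]
  push_cast
  linear_combination (p.choose q : ℚ) * hinv - (harmonic q + ((q:ℚ)+1)⁻¹) * f2

lemma pb_sum_step (p : ℕ) (u : PowerSeries ℚ) :
    C ((p:ℚ)+1) *
        (∑ k ∈ Finset.Icc 1 (p+1), C (((p+1).choose k : ℚ) * harmonic k) * u^(p+1-k))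
      = (u+1)^p
        + (C (2*(p:ℚ)+1) * u + C ((p:ℚ)+1)) *
            (∑ k ∈ Finset.Icc 1 p, C ((p.choose k : ℚ) * harmonic k) * u^(p-k))
        - (u^2+u) *
            (∑ k ∈ Finset.Icc 1 p,
              C ((p.choose k : ℚ) * harmonic k * ((p-k : ℕ):ℚ)) * u^(p-k-1)) := by
  have hS : (∑ k ∈ Finset.Icc 1 p, C ((p.choose k : ℚ) * harmonic k) * u^(p-k))
      = ∑ i ∈ Finset.range p, C ((p.choose (p-i) : ℚ) * harmonic (p-i)) * u^i := by
    rw [pb_sum_Icc_reflect]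
    refine Finset.sum_congr rfl fun i hi => ?_
    rw [Finset.mem_range] at hi
    have h : p - (p - i) = i := by omega
    rw [h]
  have hT : (∑ k ∈ Finset.Icc 1 p,
        C ((p.choose k : ℚ) * harmonic k * ((p-k : ℕ):ℚ)) * u^(p-k-1))
      = ∑ i ∈ Finset.range p,
          C ((p.choose (p-i) : ℚ) * harmonic (p-i) * (i:ℚ)) * u^(i-1) := by
    rw [pb_sum_Icc_reflect]
    refine Finset.sum_congr rfl fun i hi => ?_
    rw [Finset.mem_range] at hi
    have h : p - (p - i) = i := by omega
    rw [h]
  have hS1 : (∑ k ∈ Finset.Icc 1 (p+1),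
        C (((p+1).choose k : ℚ) * harmonic k) * u^(p+1-k))
      = ∑ i ∈ Finset.range (p+1),
          C (((p+1).choose (p+1-i) : ℚ) * harmonic (p+1-i)) * u^i := by
    rw [pb_sum_Icc_reflect]
    refine Finset.sum_congr rfl fun i hi => ?_
    rw [Finset.mem_range] at hi
    have h : p + 1 - (p + 1 - i) = i := by omega
    rw [h]
  rw [hS, hT, hS1]
  have h1 : (u+1)^p = ∑ i ∈ Finset.range (p+1), C ((p.choose i : ℚ)) * u^i := by
    rw [add_pow]
    refine Finset.sum_congr rfl fun i _ => ?_
    rw [one_pow, map_natCast]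
    ring
  have hA : (∑ i ∈ Finset.range (p+1),
        C ((2*(p:ℚ)+2-i) * ((p.choose (p+1-i)):ℚ) * harmonic (p+1-i)) * u^i)
      = C (2*(p:ℚ)+1) * u *
          (∑ i ∈ Finset.range p, C ((p.choose (p-i) : ℚ) * harmonic (p-i)) * u^i)
        - u^2 * (∑ i ∈ Finset.range p,
            C ((p.choose (p-i) : ℚ) * harmonic (p-i) * (i:ℚ)) * u^(i-1)) := by
    rw [Finset.sum_range_succ']
    have h0 : C ((2*(p:ℚ)+2-(0:ℕ)) * ((p.choose (p+1-0)):ℚ) * harmonic (p+1-0)) * u^0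
        = 0 := by
      have : p.choose (p+1) = 0 := Nat.choose_eq_zero_of_lt (by omega)
      simp [this]
    rw [h0, add_zero, Finset.mul_sum, Finset.mul_sum, ← Finset.sum_sub_distrib]
    refine Finset.sum_congr rfl fun i hi => ?_
    rw [Finset.mem_range] at hi
    have e1 : p + 1 - (i + 1) = p - i := by omega
    rw [e1]
    rcases Nat.eq_zero_or_pos i with h | h
    · subst h
      push_cast
      simp only [mul_zero, map_zero, zero_mul, sub_zero, pow_zero, pow_one, mul_one]
      rw [mul_assoc, map_mul]
      ring_nf
    · have e2 : i - 1 + 2 = i + 1 := by omega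
      have e3 : u^2 * u^(i-1) = u^(i+1) := by rw [← pow_add]; congr 1; omega
      calc C ((2*(p:ℚ)+2-(↑(i+1):ℚ)) * ((p.choose (p-i)):ℚ) * harmonic (p-i)) * u^(i+1)
          = C (2*(p:ℚ)+1) * (C ((p.choose (p-i) : ℚ) * harmonic (p-i))) * u^(i+1)
            - C ((p.choose (p-i) : ℚ) * harmonic (p-i) * (i:ℚ)) * u^(i+1) := by
            rw [← sub_mul, ← map_mul, ← map_sub]
            congr 1
            push_cast
            ring
        _ = C (2*(p:ℚ)+1) * u * (C ((p.choose (p-i) : ℚ) * harmonic (p-i)) * u^i)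
            - u^2 * (C ((p.choose (p-i) : ℚ) * harmonic (p-i) * (i:ℚ)) * u^(i-1)) := by
            rw [show u^2 * (C ((p.choose (p-i) : ℚ) * harmonic (p-i) * (i:ℚ)) * u^(i-1))
                = C ((p.choose (p-i) : ℚ) * harmonic (p-i) * (i:ℚ)) * (u^2 * u^(i-1)) by ring,
              e3, pow_succ]
            ring
  have hB : (∑ i ∈ Finset.range (p+1),
        C (((p:ℚ)+1-i) * ((p.choose (p-i)):ℚ) * harmonic (p-i)) * u^i)
      = C ((p:ℚ)+1) *
          (∑ i ∈ Finset.range p, C ((p.choose (p-i) : ℚ) * harmonic (p-i)) * u^i)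
        - u * (∑ i ∈ Finset.range p,
            C ((p.choose (p-i) : ℚ) * harmonic (p-i) * (i:ℚ)) * u^(i-1)) := by
    rw [Finset.sum_range_succ]
    have h0 : C (((p:ℚ)+1-(p:ℚ)) * ((p.choose (p-p)):ℚ) * harmonic (p-p)) * u^p = 0 := by
      simp
    rw [h0, add_zero, Finset.mul_sum, Finset.mul_sum, ← Finset.sum_sub_distrib]
    refine Finset.sum_congr rfl fun i hi => ?_
    rw [Finset.mem_range] at hi
    rcases Nat.eq_zero_or_pos i with h | h
    · subst h
      push_cast
      simp only [mul_zero, map_zero, zero_mul, sub_zero, pow_zero, mul_one]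
      rw [mul_assoc, map_mul]
    · have e3 : u * u^(i-1) = u^i := by
        rw [← pow_succ']; congr 1; omega
      calc C (((p:ℚ)+1-(i:ℚ)) * ((p.choose (p-i)):ℚ) * harmonic (p-i)) * u^i
          = C ((p:ℚ)+1) * (C ((p.choose (p-i) : ℚ) * harmonic (p-i))) * u^i
            - C ((p.choose (p-i) : ℚ) * harmonic (p-i) * (i:ℚ)) * u^i := by
            rw [← sub_mul, ← map_mul, ← map_sub]
            congr 1
            ring
        _ = C ((p:ℚ)+1) * (C ((p.choose (p-i) : ℚ) * harmonic (p-i)) * u^i)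
            - u * (C ((p.choose (p-i) : ℚ) * harmonic (p-i) * (i:ℚ)) * u^(i-1)) := by
            rw [show u * (C ((p.choose (p-i) : ℚ) * harmonic (p-i) * (i:ℚ)) * u^(i-1))
                = C ((p.choose (p-i) : ℚ) * harmonic (p-i) * (i:ℚ)) * (u * u^(i-1)) by ring,
              e3]
            ring
  have key : ∀ i ∈ Finset.range (p+1),
      C ((p:ℚ)+1) * (C (((p+1).choose (p+1-i) : ℚ) * harmonic (p+1-i)) * u^i)
        = C ((p.choose i : ℚ)) * u^i
          + C ((2*(p:ℚ)+2-i) * ((p.choose (p+1-i)):ℚ) * harmonic (p+1-i)) * u^i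
          + C (((p:ℚ)+1-i) * ((p.choose (p-i)):ℚ) * harmonic (p-i)) * u^i := by
    intro i hi
    rw [Finset.mem_range] at hi
    have hid := pb_coeff_id p i (by omega)
    rw [← mul_assoc, ← map_mul, ← add_mul, ← add_mul, ← map_add, ← map_add]
    have harg : ((p:ℚ)+1) * (((p+1).choose (p+1-i) : ℚ) * harmonic (p+1-i))
        = (p.choose i : ℚ) + (2*(p:ℚ)+2-(i:ℚ)) * ((p.choose (p+1-i)):ℚ) * harmonic (p+1-i)
          + ((p:ℚ)+1-(i:ℚ)) * ((p.choose (p-i)):ℚ) * harmonic (p-i) := by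
      linear_combination hid
    rw [harg]
  rw [Finset.mul_sum, Finset.sum_congr rfl key, Finset.sum_add_distrib,
    Finset.sum_add_distrib, ← h1, hA, hB]
  ring

/-- Let `B n p` be the family of rational numbers determined by `B n 0 = bernoulli n`
(the `n`-th Bernoulli number with the convention `B₁ = -1/2`) and the recursion
`B (n+1) p = p·B n p - ((p+1)²/(p+2))·B n (p+1)`.  Let
`F p = Σ_{n≥0} B n p · Xⁿ/n!` be the exponential generating function in `ℚ⟦X⟧`.
Then for every `p`:
`F p · (exp X - 1)^(p+1)
  = (p+1)·(X - H_p)·exp(pX) + (p+1)·Σ_{k=1}^{p} C(p,k)·H_k·(exp X - 1)^(p-k)`,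
where `H_n` is the `n`-th harmonic number. -/
theorem p_bernoulli_egf_closed_form (B : ℕ → ℕ → ℚ)
    (hinit : ∀ n : ℕ, B n 0 = bernoulli n)
    (hrec : ∀ n p : ℕ, B (n + 1) p =
      (p : ℚ) * B n p - ((p + 1 : ℚ) ^ 2 / (p + 2)) * B n (p + 1))
    (F : ℕ → PowerSeries ℚ)
    (hF : ∀ p : ℕ, F p = PowerSeries.mk fun n => B n p / n.factorial) :
    ∀ p : ℕ,
      F p * (PowerSeries.exp ℚ - 1) ^ (p + 1) =
        C ((p : ℚ) + 1) * (X - C (harmonic p)) *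
            PowerSeries.rescale (p : ℚ) (PowerSeries.exp ℚ) +
          C ((p : ℚ) + 1) *
            ∑ k ∈ Finset.Icc 1 p,
              C ((p.choose k : ℚ) * harmonic k) * (PowerSeries.exp ℚ - 1) ^ (p - k) := by
  intro p
  induction p with
  | zero =>
    have hF0 : F 0 = bernoulliPowerSeries ℚ := by
      rw [hF 0]
      ext n
      simp [bernoulliPowerSeries, hinit n]
    simp only [Nat.cast_zero, zero_add, pow_one]
    rw [hF0, bernoulliPowerSeries_mul_exp_sub_one,
      Finset.Icc_eq_empty (by omega : ¬(1:ℕ) ≤ 0)]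
    simp [rescale_zero, constantCoeff_exp]
  | succ p ih =>
    rw [← exp_pow_eq_rescale_exp] at ih
    rw [← exp_pow_eq_rescale_exp]
    have e1 : C ((p:ℚ)+1) = C (p:ℚ) + 1 := by rw [map_add, map_one]
    have e2 : C ((↑(p+1):ℚ)+1) = C (p:ℚ) + 2 := by
      rw [show ((↑(p+1):ℚ)+1) = (p:ℚ)+2 by push_cast; ring, map_add, map_ofNat]
    have e3 : C (harmonic (p+1)) = C (harmonic p) + C (((p:ℚ)+1)⁻¹) := by
      rw [harmonic_succ, map_add]
      norm_num
    rw [e1] at ih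
    rw [e2, e3]
    have hdF : d⁄dX ℚ (F p)
        = C (p:ℚ) * F p - C (((p:ℚ)+1)^2/((p:ℚ)+2)) * F (p+1) := by
      ext n
      rw [coeff_derivative, hF p, hF (p+1), map_sub, coeff_C_mul, coeff_C_mul]
      simp only [coeff_mk]
      rw [hrec n p]
      have h1 : ((n+1).factorial : ℚ) = (n.factorial : ℚ) * ((n:ℚ)+1) := by
        rw [Nat.factorial_succ]; push_cast; ring
      have h2 : (n.factorial : ℚ) ≠ 0 := Nat.cast_ne_zero.mpr n.factorial_ne_zero
      have h3 : ((n:ℚ)+1) ≠ 0 := by positivity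
      rw [h1]
      field_simp
    have hA : C (((p:ℚ)+1)^2/((p:ℚ)+2)) * F (p+1) = C (p:ℚ) * F p - d⁄dX ℚ (F p) := by
      rw [hdF]; ring
    have hXh : d⁄dX ℚ (X - C (harmonic p)) = 1 := by
      rw [map_sub, derivative_X, derivative_C, sub_zero]
    have hdS : d⁄dX ℚ (∑ k ∈ Finset.Icc 1 p,
          C ((p.choose k : ℚ) * harmonic k) * (PowerSeries.exp ℚ - 1)^(p-k))
        = (∑ k ∈ Finset.Icc 1 p,
            C ((p.choose k : ℚ) * harmonic k * ((p-k : ℕ):ℚ)) *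
              (PowerSeries.exp ℚ - 1)^(p-k-1)) * PowerSeries.exp ℚ := by
      rw [map_sum, Finset.sum_mul]
      refine Finset.sum_congr rfl fun k hk => ?_
      rw [Finset.mem_Icc] at hk
      rw [Derivation.leibniz, derivative_C, smul_zero, add_zero, smul_eq_mul]
      rcases eq_or_lt_of_le hk.2 with h | h
      · subst h
        simp [Nat.sub_self]
      · have epk : p - k = (p - k - 1) + 1 := by omega
        rw [epk, pb_du_pow]
        simp only [Nat.add_sub_cancel]
        have ec : ((p - k - 1 + 1 : ℕ):ℚ) = ((p-k-1 : ℕ):ℚ) + 1 := by push_cast; ring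
        rw [ec, show C ((p.choose k : ℚ) * harmonic k * (((p-k-1:ℕ):ℚ)+1))
          = C ((p.choose k : ℚ) * harmonic k) * C (((p-k-1:ℕ):ℚ)+1) from by rw [← map_mul]]
        ring
    have hdR : d⁄dX ℚ ((C (p:ℚ) + 1) * (X - C (harmonic p)) * PowerSeries.exp ℚ ^ p
          + (C (p:ℚ) + 1) * ∑ k ∈ Finset.Icc 1 p,
              C ((p.choose k : ℚ) * harmonic k) * (PowerSeries.exp ℚ - 1)^(p-k))
        = (C (p:ℚ) + 1) * PowerSeries.exp ℚ ^ p
          + (C (p:ℚ) + 1) * C (p:ℚ) * (X - C (harmonic p)) * PowerSeries.exp ℚ ^ p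
          + (C (p:ℚ) + 1) * ((∑ k ∈ Finset.Icc 1 p,
              C ((p.choose k : ℚ) * harmonic k * ((p-k : ℕ):ℚ)) *
                (PowerSeries.exp ℚ - 1)^(p-k-1)) * PowerSeries.exp ℚ) := by
      simp only [map_add, map_sub, Derivation.leibniz, smul_eq_mul, derivative_C,
        Derivation.map_one_eq_zero, derivative_X, hdS, pb_dexppow, mul_zero, zero_mul,
        add_zero, zero_add, sub_zero, mul_one]
      ring
    have hC2ne : C (((p:ℚ)+1)^2/((p:ℚ)+2)) ≠ 0 := by
      intro h
      have h1 := congrArg constantCoeff h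
      rw [constantCoeff_C, map_zero] at h1
      have h2 : (((p:ℚ)+1)^2/((p:ℚ)+2)) ≠ 0 := by positivity
      exact h2 h1
    have hinv : C (((p:ℚ)+1)⁻¹) * (C (p:ℚ) + 1) = 1 := by
      rw [← e1, ← map_mul, inv_mul_cancel₀ (by positivity : ((p:ℚ)+1) ≠ 0), map_one]
    have hc2e : C (((p:ℚ)+1)^2/((p:ℚ)+2)) * (C (p:ℚ) + 2)
        = (C (p:ℚ) + 1) * (C (p:ℚ) + 1) := by
      rw [← e1, show C (p:ℚ) + 2 = C ((p:ℚ)+2) by rw [map_add, map_ofNat],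
        ← map_mul, ← map_mul]
      congr 1
      have h2 : ((p:ℚ)+2) ≠ 0 := by positivity
      field_simp
    have hss := pb_sum_step p (PowerSeries.exp ℚ - 1)
    rw [show (PowerSeries.exp ℚ - 1) + 1 = PowerSeries.exp ℚ by ring, e1,
      show C (2*(p:ℚ)+1) = 2 * C (p:ℚ) + 1 by rw [map_add, map_mul, map_ofNat, map_one]]
      at hss
    have hD1 : d⁄dX ℚ (F p * (PowerSeries.exp ℚ - 1)^(p+1))
        = d⁄dX ℚ (F p) * (PowerSeries.exp ℚ - 1)^(p+1)
          + F p * (C ((p:ℚ)+1) * (PowerSeries.exp ℚ - 1)^p * PowerSeries.exp ℚ) := by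
      rw [Derivation.leibniz, pb_du_pow p, smul_eq_mul, smul_eq_mul]
      ring
    have hdih := congrArg (d⁄dX ℚ) ih
    rw [hD1, hdR, e1] at hdih
    refine mul_left_cancel₀ hC2ne ?_
    linear_combination (PowerSeries.exp ℚ - 1)^(p+1+1) * hA
      + (C (p:ℚ) * (PowerSeries.exp ℚ - 1) + (C (p:ℚ) + 1) * PowerSeries.exp ℚ) * ih
      - (PowerSeries.exp ℚ - 1) * hdih
      - (C (p:ℚ) + 1) * hss
      + (C (p:ℚ) + 1) * PowerSeries.exp ℚ ^ (p+1) * hinv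
      - ((X - C (harmonic p) - C (((p:ℚ)+1)⁻¹)) * PowerSeries.exp ℚ ^ (p+1)
          + ∑ k ∈ Finset.Icc 1 (p+1),
              C (((p+1).choose k : ℚ) * harmonic k) * (PowerSeries.exp ℚ - 1)^(p+1-k))
        * hc2e
end

section
/- For each natural number p, define g_p : ℝ \ {0} → ℝ by g_p(t) = (p+1)·(t - H_p)·e^{pt}/(e^t - 1)^{p+1} + (p+1)·Σ_{k=1}^{p} C(p,k)·H_k/(e^t - 1)^{k+1}, where H_n = Σ_{j=1}^{n} 1/j is the n-th harmonic number (H_0 = 0) and C(p,k) is the binomial coefficient. Then for every p ≥ 0 and every real t ≠ 0, the function g_p is differentiable at t and p·g_p(t) - g_p'(t) = ((p+1)^2/(p+2))·g_{p+1}(t). -/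
open Real Finset

/-- For each natural number `p`, the function
`g p t = (p+1)·(t - H_p)·e^{pt}/(e^t - 1)^{p+1}
        + (p+1)·Σ_{k=1}^{p} C(p,k)·H_k/(e^t - 1)^{k+1}`
(defined for `t ≠ 0`, where `H_n` is the `n`-th harmonic number). -/
private lemma binom_div (p : ℕ) (x : ℝ) (hx : x ≠ 0) :
    (x+1)^p / x^(p+2) = ∑ j ∈ range (p+1), (p.choose j : ℝ) / x^(j+2) := by
  rw [show (x+1)^p = ∑ j ∈ range (p+1), x^j * (p.choose j : ℝ) by
    simpa using add_pow x 1 p]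
  rw [Finset.sum_div, ← Finset.sum_range_reflect]
  refine Finset.sum_congr rfl fun j hj => ?_
  have hjp : j ≤ p := Nat.lt_succ_iff.mp (Finset.mem_range.mp hj)
  have e1 : p + 1 - 1 - j = p - j := by omega
  rw [e1, Nat.choose_symm hjp]
  rw [div_eq_div_iff (pow_ne_zero _ hx) (pow_ne_zero _ hx)]
  rw [mul_comm (x^(p-j)) _, mul_assoc, ← pow_add]
  congr 2
  omega


private lemma icc_to_range (n : ℕ) (f : ℕ → ℝ) :
    ∑ k ∈ Icc 1 n, f k = ∑ j ∈ range n, f (j+1) := by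
  have : Icc 1 n = Ico 1 (n+1) := by rw [Finset.Ico_add_one_right_eq_Icc]
  rw [this, Finset.sum_Ico_eq_sum_range]
  simp [add_comm]

private lemma choose_key (p j : ℕ) :
    ((p:ℝ)+1) * ((p+1).choose (j+1) : ℝ)
      = ((j:ℝ)+1) * (p.choose j : ℝ) + ((p:ℝ)+(j:ℝ)+2) * (p.choose (j+1) : ℝ) := by
  have h : (p+1) * p.choose j = (p+1).choose (j+1) * (j+1) := Nat.add_one_mul_choose_eq p j
  have h2 : (p+1).choose (j+1) = p.choose j + p.choose (j+1) := Nat.choose_succ_succ p j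
  rw [h2] at h ⊢
  have h' : ((p:ℝ)+1) * (p.choose j : ℝ) = ((p.choose j : ℝ) + (p.choose (j+1) : ℝ)) * ((j:ℝ)+1) := by
    exact_mod_cast h
  push_cast
  nlinarith [h']

private lemma harm_succ (j : ℕ) : ((harmonic (j+1) : ℚ) : ℝ) = ((harmonic j : ℚ) : ℝ) + 1/((j:ℝ)+1) := by
  rw [harmonic_succ]
  push_cast
  ring

private lemma sum_key (p : ℕ) (x : ℝ) (hx : x ≠ 0) :
    ∑ k ∈ Icc 1 p, (p.choose k : ℝ) * (harmonic k : ℝ) *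
        (((p:ℝ)+(k:ℝ)+1)/x^(k+1) + ((k:ℝ)+1)/x^(k+2))
      = ((p:ℝ)+1) * ∑ k ∈ Icc 1 (p+1), ((p+1).choose k : ℝ) * (harmonic k : ℝ) / x^(k+1)
        - ∑ j ∈ range (p+1), (p.choose j : ℝ) / x^(j+2) := by
  rw [icc_to_range, icc_to_range]
  rw [show ∑ j ∈ range p, (p.choose (j+1) : ℝ) * (harmonic (j+1) : ℝ) *
        (((p:ℝ)+((j+1:ℕ):ℝ)+1)/x^((j+1)+1) + (((j+1:ℕ):ℝ)+1)/x^((j+1)+2))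
      = ∑ j ∈ range (p+1), (p.choose (j+1) : ℝ) * (harmonic (j+1) : ℝ) *
        (((p:ℝ)+((j+1:ℕ):ℝ)+1)/x^((j+1)+1) + (((j+1:ℕ):ℝ)+1)/x^((j+1)+2)) by
    rw [Finset.sum_range_succ, Nat.choose_succ_self]
    simp]
  have hsplit : ∀ j ∈ range (p+1),
      (p.choose (j+1) : ℝ) * (harmonic (j+1) : ℝ) *
        (((p:ℝ)+((j+1:ℕ):ℝ)+1)/x^((j+1)+1) + (((j+1:ℕ):ℝ)+1)/x^((j+1)+2))
      = (p.choose (j+1) : ℝ) * (harmonic (j+1) : ℝ) * (((p:ℝ)+(j:ℝ)+2)/x^(j+2))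
        + (p.choose (j+1) : ℝ) * (harmonic (j+1) : ℝ) * (((j:ℝ)+2)/x^(j+3)) := by
    intro j hj
    push_cast
    ring_nf
  rw [Finset.sum_congr rfl hsplit, Finset.sum_add_distrib]
  have hshift : ∑ j ∈ range (p+1), (p.choose (j+1) : ℝ) * (harmonic (j+1) : ℝ) * (((j:ℝ)+2)/x^(j+3))
      = ∑ j ∈ range (p+1), (p.choose j : ℝ) * (harmonic j : ℝ) * (((j:ℝ)+1)/x^(j+2)) := by
    have h1 := Finset.sum_range_succ' (fun j => (p.choose j : ℝ) * (harmonic j : ℝ) * (((j:ℝ)+1)/x^(j+2))) (p+1)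
    have h2 := Finset.sum_range_succ (fun j => (p.choose j : ℝ) * (harmonic j : ℝ) * (((j:ℝ)+1)/x^(j+2))) (p+1)
    simp only [Nat.choose_succ_self, Nat.cast_zero, harmonic_zero, Rat.cast_zero, zero_mul,
      mul_zero, add_zero] at h1 h2
    have h3 : ∑ k ∈ range (p+1), (p.choose (k+1) : ℝ) * (harmonic (k+1) : ℝ) * (((((k+1:ℕ)):ℝ)+1)/x^((k+1)+2))
        = ∑ j ∈ range (p+1), (p.choose (j+1) : ℝ) * (harmonic (j+1) : ℝ) * (((j:ℝ)+2)/x^(j+3)) := by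
      refine Finset.sum_congr rfl fun k hk => ?_
      push_cast
      ring_nf
    rw [h2, h3] at h1
    exact h1.symm
  rw [hshift, Finset.mul_sum, ← Finset.sum_add_distrib, ← Finset.sum_sub_distrib]
  refine Finset.sum_congr rfl fun j hj => ?_
  have hc := choose_key p j
  have hj1 : ((j:ℝ)+1) ≠ 0 := by positivity
  have hh2 : ((j:ℝ)+1) * ((harmonic (j+1) : ℚ) : ℝ) = ((j:ℝ)+1) * ((harmonic j : ℚ) : ℝ) + 1 := by
    rw [harm_succ]; field_simp
  push_cast
  linear_combination (-((harmonic (j+1) : ℚ) : ℝ)/x^(j+2)) * hc - ((p.choose j : ℝ)/x^(j+2)) * hh2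

noncomputable def gBern (p : ℕ) (t : ℝ) : ℝ :=
  ((p : ℝ) + 1) * (t - (harmonic p : ℝ)) * Real.exp ((p : ℝ) * t) /
      (Real.exp t - 1) ^ (p + 1) +
    ((p : ℝ) + 1) *
      ∑ k ∈ Finset.Icc 1 p,
        (p.choose k : ℝ) * (harmonic k : ℝ) / (Real.exp t - 1) ^ (k + 1)

/-- For every `p ≥ 0` and every real `t ≠ 0`, `g p` is differentiable at `t` and
`p·g_p(t) - g_p'(t) = ((p+1)²/(p+2))·g_{p+1}(t)`. -/
theorem gBern_deriv_recursion (p : ℕ) (t : ℝ) (ht : t ≠ 0) :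
    DifferentiableAt ℝ (gBern p) t ∧
      (p : ℝ) * gBern p t - deriv (gBern p) t =
        (((p : ℝ) + 1) ^ 2 / ((p : ℝ) + 2)) * gBern (p + 1) t := by
  have hD : Real.exp t - 1 ≠ 0 := by
    have : Real.exp t ≠ 1 := fun h => ht (by simpa using Real.exp_eq_exp.mp (h.trans Real.exp_zero.symm))
    exact sub_ne_zero.mpr this
  have hu : HasDerivAt (fun s : ℝ => Real.exp s - 1) (Real.exp t) t :=
    (Real.hasDerivAt_exp t).sub_const 1
  have hexp : HasDerivAt (fun s : ℝ => Real.exp ((p : ℝ) * s))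
      (Real.exp ((p : ℝ) * t) * ((p : ℝ) * 1)) t :=
    (Real.hasDerivAt_exp ((p : ℝ) * t)).comp t ((hasDerivAt_id t).const_mul (p : ℝ))
  have hlin : HasDerivAt (fun s : ℝ => ((p : ℝ) + 1) * (s - ((harmonic p : ℚ) : ℝ)))
      (((p : ℝ) + 1) * 1) t :=
    ((hasDerivAt_id t).sub_const _).const_mul _
  have hN := hlin.mul hexp
  have hA := hN.div (hu.pow (p + 1)) (pow_ne_zero (p + 1) hD)
  have hS := (HasDerivAt.fun_sum (fun k (_ : k ∈ Finset.Icc 1 p) =>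
      (hasDerivAt_const t ((p.choose k : ℝ) * (harmonic k : ℝ))).div
        (hu.pow (k + 1)) (pow_ne_zero (k + 1) hD))).const_mul ((p : ℝ) + 1)
  have hg : HasDerivAt (gBern p)
      (((((p:ℝ)+1) * 1 * Real.exp ((p:ℝ)*t) +
          ((p:ℝ)+1) * (t - ((harmonic p : ℚ):ℝ)) * (Real.exp ((p:ℝ)*t) * ((p:ℝ)*1))) *
            (Real.exp t - 1)^(p+1) -
        ((p:ℝ)+1) * (t - ((harmonic p : ℚ):ℝ)) * Real.exp ((p:ℝ)*t) *
          (((p+1 : ℕ):ℝ) * (Real.exp t - 1)^(p+1-1) * Real.exp t)) /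
          ((Real.exp t - 1)^(p+1))^2 +
      ((p:ℝ)+1) * ∑ k ∈ Finset.Icc 1 p,
        (0 * (Real.exp t - 1)^(k+1) -
          (p.choose k : ℝ) * (harmonic k : ℝ) *
            (((k+1 : ℕ):ℝ) * (Real.exp t - 1)^(k+1-1) * Real.exp t)) /
          ((Real.exp t - 1)^(k+1))^2) t := hA.add hS
  refine ⟨hg.differentiableAt, ?_⟩
  rw [hg.deriv]
  -- binomial expansion of exp(p t)
  have hb : Real.exp ((p:ℝ)*t) / (Real.exp t - 1)^(p+2)
      = ∑ j ∈ range (p+1), (p.choose j : ℝ) / (Real.exp t - 1)^(j+2) := by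
    have hb0 := binom_div p (Real.exp t - 1) hD
    rw [show Real.exp t - 1 + 1 = Real.exp t by ring] at hb0
    rw [Real.exp_nat_mul t p]
    exact hb0
  -- the sum manipulation
  have hPS : (p:ℝ) * ∑ k ∈ Finset.Icc 1 p,
        (p.choose k : ℝ) * (harmonic k : ℝ) / (Real.exp t - 1) ^ (k + 1)
      - ∑ k ∈ Finset.Icc 1 p,
        (0 * (Real.exp t - 1)^(k+1) -
          (p.choose k : ℝ) * (harmonic k : ℝ) *
            (((k+1 : ℕ):ℝ) * (Real.exp t - 1)^(k+1-1) * Real.exp t)) /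
          ((Real.exp t - 1)^(k+1))^2
      = ∑ k ∈ Icc 1 p, (p.choose k : ℝ) * (harmonic k : ℝ) *
          (((p:ℝ)+(k:ℝ)+1)/(Real.exp t - 1)^(k+1) + ((k:ℝ)+1)/(Real.exp t - 1)^(k+2)) := by
    rw [Finset.mul_sum, ← Finset.sum_sub_distrib]
    refine Finset.sum_congr rfl fun k hk => ?_
    simp only [Nat.add_sub_cancel]
    have hx1 : (Real.exp t - 1)^(k+1) ≠ 0 := pow_ne_zero _ hD
    have hx2 : (Real.exp t - 1)^(k+2) ≠ 0 := pow_ne_zero _ hD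
    field_simp
    push_cast
    ring
  rw [sum_key p (Real.exp t - 1) hD, ← hb] at hPS
  have heq : ∑ k ∈ Finset.Icc 1 p,
        (0 * (Real.exp t - 1)^(k+1) -
          (p.choose k : ℝ) * (harmonic k : ℝ) *
            (((k+1 : ℕ):ℝ) * (Real.exp t - 1)^(k+1-1) * Real.exp t)) /
          ((Real.exp t - 1)^(k+1))^2
      = (p:ℝ) * ∑ k ∈ Finset.Icc 1 p,
          (p.choose k : ℝ) * (harmonic k : ℝ) / (Real.exp t - 1) ^ (k + 1)
        - ((p:ℝ)+1) * ∑ k ∈ Icc 1 (p+1),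
            ((p+1).choose k : ℝ) * (harmonic k : ℝ) / (Real.exp t - 1)^(k+1)
        + Real.exp ((p:ℝ)*t) / (Real.exp t - 1)^(p+2) := by linarith [hPS]
  rw [heq]
  simp only [gBern]
  push_cast
  rw [show Real.exp (((p:ℝ)+1)*t) = Real.exp ((p:ℝ)*t) * Real.exp t by
    rw [← Real.exp_add]; ring_nf]
  rw [show ((harmonic (p+1) : ℚ):ℝ) = ((harmonic p : ℚ):ℝ) + 1/((p:ℝ)+1) from harm_succ p]
  have h1 : (Real.exp t - 1)^(p+1) ≠ 0 := pow_ne_zero _ hD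
  have h2 : (Real.exp t - 1)^(p+2) ≠ 0 := pow_ne_zero _ hD
  have h3 : ((p:ℝ)+1) ≠ 0 := by positivity
  have h4 : ((p:ℝ)+2) ≠ 0 := by positivity
  field_simp
  ring
end
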